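/- arXiv:2101.11693 — 2 statements merged into one kernel-verified Lean document; each statement's English description precedes it below -/
import Mathlib

section
/- Let ε ∈ (0,1), δ ∈ (0,1), Δ > 0, and let a, a' ∈ ℝ satisfy |a − a'| ≤ Δ. Set σ² = 2·ln(1.25/δ)·Δ²/ε². Then the Gaussian measures gaussianReal a σ² and gaussianReal a' σ² are (ε, δ)-indistinguishable, i.e., for every measurable set S ⊆ ℝ, (gaussianReal a σ²)(S) ≤ exp(ε)·(gaussianReal a' σ²)(S) + δ. (This is the one-dimensional Gaussian mechanism: releasing f(D) + N(0, σ²) for a function f with sensitivity Δ is (ε, δ)-differentially private.) -/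
set_option maxHeartbeats 1000000

open MeasureTheory ProbabilityTheory
open Real
open scoped NNReal ENNReal


lemma gauss_symm (μ : ℝ) (v : ℝ≥0) :
    gaussianReal μ v (Set.Ioi μ) = gaussianReal μ v (Set.Iio μ) := by
  have hvar : NNReal.mk ((-1:ℝ)^2) (sq_nonneg _) = 1 := by
    ext; norm_num
  have h1 : (gaussianReal μ v).map (fun x => (-1) * x + 2*μ) = gaussianReal μ v := by
    have h3 : (fun x : ℝ => (-1) * x + 2*μ) = (fun x => x + 2*μ) ∘ (fun x => (-1) * x) := rfl
    rw [h3, ← Measure.map_map (by fun_prop) (by fun_prop),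
      gaussianReal_map_const_mul (-1), hvar, one_mul, gaussianReal_map_add_const]
    norm_num
    congr 1
    ring
  have hpre : (fun x : ℝ => (-1) * x + 2*μ) ⁻¹' (Set.Ioi μ) = Set.Iio μ := by
    ext x
    simp only [Set.mem_preimage, Set.mem_Ioi, Set.mem_Iio]
    constructor <;> intro h <;> linarith
  conv_lhs => rw [← h1]
  rw [Measure.map_apply (by fun_prop) measurableSet_Ioi, hpre]

lemma gauss_half (μ : ℝ) {v : ℝ≥0} (hv : v ≠ 0) :
    gaussianReal μ v (Set.Ioi μ) ≤ 1/2 := by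
  set ρ := gaussianReal μ v
  have h0 : ρ {μ} = 0 :=
    gaussianReal_absolutelyContinuous μ hv (measure_singleton μ)
  have hIci : ρ (Set.Ici μ) = ρ (Set.Ioi μ) := by
    refine le_antisymm ?_ (measure_mono Set.Ioi_subset_Ici_self)
    calc ρ (Set.Ici μ) ≤ ρ ({μ} ∪ Set.Ioi μ) := by
          refine measure_mono ?_
          intro x hx
          rcases eq_or_lt_of_le (Set.mem_Ici.mp hx) with h | h
          · exact Or.inl h.symm
          · exact Or.inr h
      _ ≤ ρ {μ} + ρ (Set.Ioi μ) := measure_union_le _ _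
      _ = ρ (Set.Ioi μ) := by rw [h0, zero_add]
  have hsum : ρ (Set.Ioi μ) + ρ (Set.Ioi μ) = 1 := by
    nth_rewrite 1 [show ρ (Set.Ioi μ) = ρ (Set.Iio μ) from gauss_symm μ v]
    rw [← hIci, ← measure_union (Set.Iio_disjoint_Ici le_rfl) measurableSet_Ici,
      Set.Iio_union_Ici]
    exact measure_univ
  rw [ENNReal.le_div_iff_mul_le (Or.inl two_ne_zero) (Or.inl ENNReal.ofNat_ne_top)]
  calc ρ (Set.Ioi μ) * 2 = ρ (Set.Ioi μ) + ρ (Set.Ioi μ) := by ring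
    _ ≤ 1 := hsum.le

lemma tail_exp {v : ℝ≥0} (hv : v ≠ 0) (m s : ℝ) (hs : 0 ≤ s) :
    gaussianReal m v (Set.Ioi (m + s)) ≤ ENNReal.ofReal (Real.exp (-s^2/(2*v)) / 2) := by
  have hvpos : (0:ℝ) < v := NNReal.coe_pos.mpr hv.bot_lt
  have hpt : ∀ x ∈ Set.Ioi (m + s),
      gaussianPDF m v x ≤ ENNReal.ofReal (rexp (-s^2/(2*v))) * gaussianPDF (m+s) v x := by
    intro x hx
    have hx' : m + s < x := hx
    rw [gaussianPDF, gaussianPDF, ← ENNReal.ofReal_mul (exp_nonneg _)]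
    refine ENNReal.ofReal_le_ofReal ?_
    rw [gaussianPDFReal, gaussianPDFReal]
    rw [show rexp (-s^2/(2*v)) * ((√(2 * π * v))⁻¹ * rexp (-(x - (m+s))^2 / (2*v)))
        = (√(2 * π * v))⁻¹ * (rexp (-s^2/(2*v)) * rexp (-(x - (m+s))^2 / (2*v))) by ring,
      ← Real.exp_add]
    refine mul_le_mul_of_nonneg_left ?_ (by positivity)
    rw [Real.exp_le_exp, ← add_div, div_le_div_iff_of_pos_right (by positivity)]
    nlinarith [mul_nonneg hs (le_of_lt (sub_pos.mpr hx'))]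
  calc gaussianReal m v (Set.Ioi (m + s))
      = ∫⁻ x in Set.Ioi (m + s), gaussianPDF m v x := gaussianReal_apply m hv _
    _ ≤ ∫⁻ x in Set.Ioi (m + s),
          ENNReal.ofReal (rexp (-s^2/(2*v))) * gaussianPDF (m+s) v x :=
        setLIntegral_mono (measurable_const.mul (measurable_gaussianPDF _ _)) hpt
    _ = ENNReal.ofReal (rexp (-s^2/(2*v))) * ∫⁻ x in Set.Ioi (m + s), gaussianPDF (m+s) v x :=
        lintegral_const_mul _ (measurable_gaussianPDF _ _)
    _ = ENNReal.ofReal (rexp (-s^2/(2*v))) * gaussianReal (m+s) v (Set.Ioi (m+s)) := by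
        rw [← gaussianReal_apply _ hv]
    _ ≤ ENNReal.ofReal (rexp (-s^2/(2*v))) * (1/2) :=
        mul_le_mul_right (gauss_half _ hv) _
    _ = ENNReal.ofReal (rexp (-s^2/(2*v)) / 2) := by
        rw [ENNReal.ofReal_div_of_pos two_pos, ENNReal.ofReal_ofNat, one_div,
          ENNReal.div_eq_inv_mul, mul_comm]

lemma tail_lin {v : ℝ≥0} (hv : v ≠ 0) (m s : ℝ) (hs : s ≤ 0) :
    gaussianReal m v (Set.Ioi (m + s)) ≤ ENNReal.ofReal (1/2 + (-s) / Real.sqrt (2*π*v)) := by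
  have hvpos : (0:ℝ) < v := NNReal.coe_pos.mpr hv.bot_lt
  have hsub : Set.Ioi (m+s) ⊆ Set.Ioc (m+s) m ∪ Set.Ioi m := by
    intro x hx
    rcases le_or_gt x m with h | h
    · exact Or.inl ⟨hx, h⟩
    · exact Or.inr h
  have hIoc : gaussianReal m v (Set.Ioc (m+s) m)
      ≤ ENNReal.ofReal ((-s) / Real.sqrt (2*π*v)) := by
    have hpt : ∀ x ∈ Set.Ioc (m+s) m,
        gaussianPDF m v x ≤ ENNReal.ofReal ((Real.sqrt (2*π*v))⁻¹) := by
      intro x _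
      rw [gaussianPDF]
      refine ENNReal.ofReal_le_ofReal ?_
      rw [gaussianPDFReal]
      refine mul_le_of_le_one_right (by positivity) ?_
      rw [Real.exp_le_one_iff, neg_div]
      have : (0:ℝ) ≤ (x - m)^2 / (2*v) := by positivity
      linarith
    calc gaussianReal m v (Set.Ioc (m+s) m)
        = ∫⁻ x in Set.Ioc (m+s) m, gaussianPDF m v x := gaussianReal_apply m hv _
      _ ≤ ∫⁻ _x in Set.Ioc (m+s) m, ENNReal.ofReal ((Real.sqrt (2*π*v))⁻¹) :=
          setLIntegral_mono measurable_const hpt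
      _ = ENNReal.ofReal ((Real.sqrt (2*π*v))⁻¹) * volume (Set.Ioc (m+s) m) := by
          rw [setLIntegral_const]
      _ = ENNReal.ofReal ((Real.sqrt (2*π*v))⁻¹) * ENNReal.ofReal (-s) := by
          rw [Real.volume_Ioc]
          congr 1
          ring_nf
      _ = ENNReal.ofReal ((-s) / Real.sqrt (2*π*v)) := by
          rw [← ENNReal.ofReal_mul (by positivity), div_eq_mul_inv, mul_comm]
  calc gaussianReal m v (Set.Ioi (m+s))
      ≤ gaussianReal m v (Set.Ioc (m+s) m) + gaussianReal m v (Set.Ioi m) :=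
        (measure_mono hsub).trans (measure_union_le _ _)
    _ ≤ ENNReal.ofReal ((-s) / Real.sqrt (2*π*v)) + 1/2 :=
        add_le_add hIoc (gauss_half _ hv)
    _ = ENNReal.ofReal (1/2 + (-s) / Real.sqrt (2*π*v)) := by
        rw [ENNReal.ofReal_add (by norm_num)
          (div_nonneg (neg_nonneg.mpr hs) (Real.sqrt_nonneg _)), add_comm]
        congr 1
        rw [show ((1:ℝ)/2) = (2:ℝ)⁻¹ by norm_num, ENNReal.ofReal_inv_of_pos two_pos,
          ENNReal.ofReal_ofNat]
        exact one_div 2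


lemma key_tail (ε δ Δ : ℝ) (hε : ε ∈ Set.Ioo (0:ℝ) 1) (hδ : δ ∈ Set.Ioo (0:ℝ) 1)
    (hΔ : 0 < Δ) (σ2 : ℝ≥0) (hσ2 : (σ2 : ℝ) = 2 * Real.log (1.25 / δ) * Δ ^ 2 / ε ^ 2)
    (hv : σ2 ≠ 0) (b u : ℝ) (hu : 0 < u) (huΔ : u ≤ Δ) :
    gaussianReal b σ2 (Set.Ioi (b + (ε * σ2 / u - u/2))) ≤ ENNReal.ofReal δ := by
  obtain ⟨hε0, hε1⟩ := hε
  obtain ⟨hδ0, hδ1⟩ := hδ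
  have hvpos : (0:ℝ) < σ2 := NNReal.coe_pos.mpr hv.bot_lt
  set L := Real.log (1.25 / δ) with hLdef
  have hL : 0 < L := Real.log_pos ((one_lt_div hδ0).mpr (by linarith))
  have hexpL : Real.exp (-L) = 4*δ/5 := by
    rw [Real.exp_neg, hLdef, Real.exp_log (by positivity), inv_div]
    norm_num
    ring
  have hLlow : (1/5 : ℝ) ≤ L := by
    have h := Real.add_one_le_exp (-L)
    rw [hexpL] at h
    linarith
  set s := ε * σ2 / u - u/2 with hsdef
  set s₀ := ε * σ2 / Δ - Δ/2 with hs0def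
  have hss : s₀ ≤ s := by
    have h1 : ε * σ2 / Δ ≤ ε * σ2 / u :=
      div_le_div_of_nonneg_left (by positivity) hu huΔ
    have h2 : u / 2 ≤ Δ / 2 := by linarith
    simp only [hsdef, hs0def]
    linarith
  have hmono : gaussianReal b σ2 (Set.Ioi (b + s)) ≤ gaussianReal b σ2 (Set.Ioi (b + s₀)) :=
    measure_mono (Set.Ioi_subset_Ioi (by linarith))
  have hs0eq : s₀ = (4*L - ε)*Δ/(2*ε) := by
    rw [hs0def, hσ2]
    field_simp
    ring
  refine hmono.trans ?_
  rcases le_or_gt 0 s₀ with h0 | h0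
  · refine (tail_exp hv b s₀ h0).trans (ENNReal.ofReal_le_ofReal ?_)
    -- exp(-s₀²/(2σ2))/2 ≤ δ
    have hquad : s₀^2/(2*(σ2:ℝ)) = (4*L-ε)^2/(16*L) := by
      rw [hs0eq, hσ2]
      field_simp
      ring
    have h1 : L - 1/2 ≤ s₀^2/(2*(σ2:ℝ)) := by
      rw [hquad, le_div_iff₀ (by positivity)]
      nlinarith
    have h2 : Real.exp (-s₀^2/(2*(σ2:ℝ))) ≤ Real.exp (1/2) * (4*δ/5) := by
      rw [← hexpL, ← Real.exp_add]
      refine Real.exp_le_exp.mpr ?_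
      rw [neg_div]
      linarith
    have h3 : Real.exp (1/2) ≤ 5/2 := by
      have he := Real.exp_one_lt_d9
      have hsq : Real.exp (1/2) * Real.exp (1/2) = Real.exp 1 := by
        rw [← Real.exp_add]; norm_num
      nlinarith [Real.exp_pos (1/2)]
    nlinarith [mul_le_mul_of_nonneg_right h3 (by positivity : (0:ℝ) ≤ 4*δ/5)]
  · refine (tail_lin hv b s₀ h0.le).trans (ENNReal.ofReal_le_ofReal ?_)
    -- 1/2 + (-s₀)/√(2πσ2) ≤ δ
    have h4L : 4*L < ε := by
      by_contra hcon
      push_neg at hcon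
      rw [hs0eq] at h0
      have : (0:ℝ) ≤ (4*L - ε)*Δ/(2*ε) :=
        div_nonneg (mul_nonneg (by linarith) hΔ.le) (by positivity)
      linarith
    have hδbig : (15/16 : ℝ) < δ := by
      have h1 : Real.exp (-(1/4):ℝ) ≤ Real.exp (-L) :=
        Real.exp_le_exp.mpr (by linarith)
      have h2 : (3/4:ℝ) < Real.exp (-(1/4):ℝ) := by
        have := Real.add_one_lt_exp (show (-(1/4):ℝ) ≠ 0 by norm_num)
        linarith
      rw [hexpL] at h1
      linarith
    have hnum : -s₀ ≤ Δ/2 := by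
      rw [hs0eq, ← neg_div, div_le_iff₀ (by positivity)]
      nlinarith [mul_pos hL hΔ]
    have hπ : (157/50:ℝ) ≤ π := by
      have := Real.pi_gt_d6
      linarith
    have hden : 8*Δ/7 ≤ Real.sqrt (2*π*σ2) := by
      rw [show (8*Δ/7 : ℝ) = √((8*Δ/7)^2) from (Real.sqrt_sq (by positivity)).symm]
      refine Real.sqrt_le_sqrt ?_
      have hε2 : ε^2 ≤ 1 := by nlinarith
      have hσ2ge : 4*π*L*Δ^2 ≤ 2*π*(σ2:ℝ) := by
        rw [hσ2, show 2*π*(2*L*Δ^2/ε^2) = (4*π*L*Δ^2)/ε^2 by ring,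
          le_div_iff₀ (by positivity)]
        nlinarith [mul_pos (mul_pos (mul_pos (by norm_num : (0:ℝ) < 4) Real.pi_pos) hL)
          (pow_pos hΔ 2)]
      have hπL : (157/250 : ℝ) ≤ π * L := by
        nlinarith [mul_le_mul hπ hLlow (by norm_num) Real.pi_pos.le]
      nlinarith [sq_nonneg Δ]
    have hfrac : (-s₀) / Real.sqrt (2*π*σ2) ≤ 7/16 := by
      have hd : (0:ℝ) < 8*Δ/7 := by positivity
      calc (-s₀) / Real.sqrt (2*π*σ2) ≤ (Δ/2) / (8*Δ/7) := by
            refine div_le_div₀ (by positivity) hnum hd hden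
        _ = 7/16 := by field_simp; ring
    linarith

lemma pdf_ratio {v : ℝ≥0} (hvpos : 0 < (v:ℝ)) {a a' x ε : ℝ}
    (h : Real.exp ε * gaussianPDFReal a' v x < gaussianPDFReal a v x) :
    2*(v:ℝ)*ε < (a - a')*(2*x - a - a') := by
  rw [gaussianPDFReal, gaussianPDFReal] at h
  have hC : 0 < (√(2*π*(v:ℝ)))⁻¹ := by positivity
  rw [show Real.exp ε * ((√(2*π*(v:ℝ)))⁻¹ * rexp (-(x - a')^2/(2*(v:ℝ))))
      = (√(2*π*(v:ℝ)))⁻¹ * rexp (ε + -(x - a')^2/(2*(v:ℝ))) by rw [Real.exp_add]; ring] at h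
  have h2 : ε + -(x-a')^2/(2*(v:ℝ)) < -(x-a)^2/(2*(v:ℝ)) :=
    Real.exp_lt_exp.mp ((mul_lt_mul_iff_right₀ hC).mp h)
  have h3 := mul_lt_mul_of_pos_right h2 (show (0:ℝ) < 2*v by positivity)
  rw [add_mul, div_mul_cancel₀ _ (show (2*(v:ℝ)) ≠ 0 by positivity),
    div_mul_cancel₀ _ (show (2*(v:ℝ)) ≠ 0 by positivity)] at h3
  nlinarith

/-- The one-dimensional Gaussian mechanism: for `|a - a'| ≤ Δ` and
`σ² = 2 ln(1.25/δ) Δ² / ε²`, the Gaussian measures with means `a`, `a'` and variance `σ²`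
are `(ε, δ)`-indistinguishable. -/
theorem gaussian_mechanism_one_dim
    (ε δ Δ a a' : ℝ)
    (hε : ε ∈ Set.Ioo (0 : ℝ) 1) (hδ : δ ∈ Set.Ioo (0 : ℝ) 1)
    (hΔ : 0 < Δ) (ha : |a - a'| ≤ Δ)
    (σ2 : NNReal) (hσ2 : (σ2 : ℝ) = 2 * Real.log (1.25 / δ) * Δ ^ 2 / ε ^ 2)
    (S : Set ℝ) (hS : MeasurableSet S) :
    gaussianReal a σ2 S ≤ ENNReal.ofReal (Real.exp ε) * gaussianReal a' σ2 S
      + ENNReal.ofReal δ := by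
  have hL : 0 < Real.log (1.25 / δ) :=
    Real.log_pos ((one_lt_div hδ.1).mpr (by linarith [hδ.2]))
  have hvpos : (0:ℝ) < σ2 := by
    rw [hσ2]
    exact div_pos (by positivity) (pow_pos hε.1 2)
  have hv : σ2 ≠ 0 := by
    intro h
    rw [h] at hvpos
    simp at hvpos
  set B := {x : ℝ | Real.exp ε * gaussianPDFReal a' σ2 x < gaussianPDFReal a σ2 x} with hBdef
  have hBm : MeasurableSet B :=
    measurableSet_lt (measurable_const.mul (measurable_gaussianPDFReal _ _))
      (measurable_gaussianPDFReal _ _)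
  have hsplit : gaussianReal a σ2 S ≤ gaussianReal a σ2 (S ∩ Bᶜ) + gaussianReal a σ2 B := by
    refine (measure_mono ?_).trans (measure_union_le _ _)
    intro x hx
    by_cases hxB : x ∈ B
    · exact Or.inr hxB
    · exact Or.inl ⟨hx, hxB⟩
  have hmain : gaussianReal a σ2 (S ∩ Bᶜ) ≤ ENNReal.ofReal (Real.exp ε) * gaussianReal a' σ2 S := by
    rw [gaussianReal_apply a hv, gaussianReal_apply a' hv]
    calc ∫⁻ x in S ∩ Bᶜ, gaussianPDF a σ2 x
        ≤ ∫⁻ x in S ∩ Bᶜ, ENNReal.ofReal (Real.exp ε) * gaussianPDF a' σ2 x := by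
          refine setLIntegral_mono (measurable_const.mul (measurable_gaussianPDF _ _)) ?_
          intro x hx
          have hxB : ¬ (Real.exp ε * gaussianPDFReal a' σ2 x < gaussianPDFReal a σ2 x) := hx.2
          push_neg at hxB
          rw [gaussianPDF, gaussianPDF, ← ENNReal.ofReal_mul (Real.exp_nonneg _)]
          exact ENNReal.ofReal_le_ofReal hxB
      _ = ENNReal.ofReal (Real.exp ε) * ∫⁻ x in S ∩ Bᶜ, gaussianPDF a' σ2 x :=
          lintegral_const_mul _ (measurable_gaussianPDF _ _)
      _ ≤ ENNReal.ofReal (Real.exp ε) * ∫⁻ x in S, gaussianPDF a' σ2 x :=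
          mul_le_mul_right (lintegral_mono_set Set.inter_subset_left) _
  have hbad : gaussianReal a σ2 B ≤ ENNReal.ofReal δ := by
    set d := a - a' with hd
    clear_value d
    rcases lt_trichotomy d 0 with hdneg | hd0 | hdpos
    · -- d < 0
      set w := ε * σ2 / d - d/2 with hw
      clear_value w
      have hsub : B ⊆ Set.Iio (a + w) := by
        intro x hx
        have h1 : 2*(σ2:ℝ)*ε < d*(2*x - a - a') := by rw [hd]; exact pdf_ratio hvpos hx
        have ha' : a' = a - d := by rw [hd]; ring
        rw [ha'] at h1
        have h2 : (x - a) + d/2 < ε * σ2 / d := by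
          rw [lt_div_iff_of_neg hdneg]
          nlinarith
        simp only [Set.mem_Iio, hw]
        linarith
      have hvar : NNReal.mk ((-1:ℝ)^2) (sq_nonneg _) = 1 := by ext; norm_num
      have hmap : (gaussianReal a σ2).map (fun x => (-1) * x) = gaussianReal (-a) σ2 := by
        rw [gaussianReal_map_const_mul (-1), hvar, one_mul]
        norm_num
      have hIio : gaussianReal a σ2 (Set.Iio (a + w))
          = gaussianReal (-a) σ2 (Set.Ioi (-(a+w))) := by
        rw [← hmap, Measure.map_apply (by fun_prop) measurableSet_Ioi]
        congr 1
        ext x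
        simp only [Set.mem_preimage, Set.mem_Ioi, Set.mem_Iio]
        constructor <;> intro h <;> linarith
      have hkey := key_tail ε δ Δ hε hδ hΔ σ2 hσ2 hv (-a) (-d) (by linarith)
        ((neg_le_abs d).trans ha)
      have harg : -(a + w) = -a + (ε * σ2 / (-d) - (-d)/2) := by
        rw [hw, div_neg]
        ring
      refine (measure_mono hsub).trans ?_
      rw [hIio, harg]
      exact hkey
    · -- d = 0
      have haa : a = a' := by rw [← sub_eq_zero, ← hd]; exact hd0
      have hBempty : B = ∅ := by
        ext x
        simp only [hBdef, Set.mem_setOf_eq, Set.mem_empty_iff_false, iff_false, not_lt]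
        rw [haa]
        have hp : 0 < gaussianPDFReal a' σ2 x := gaussianPDFReal_pos _ _ _ hv
        nlinarith [Real.one_le_exp (le_of_lt hε.1)]
      rw [hBempty]
      simp
    · -- d > 0
      have hsub : B ⊆ Set.Ioi (a + (ε * σ2 / d - d/2)) := by
        intro x hx
        have h1 : 2*(σ2:ℝ)*ε < d*(2*x - a - a') := by rw [hd]; exact pdf_ratio hvpos hx
        have ha' : a' = a - d := by rw [hd]; ring
        rw [ha'] at h1
        have h2 : ε * σ2 / d < (x - a) + d/2 := by
          rw [div_lt_iff₀ hdpos]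
          nlinarith
        simp only [Set.mem_Ioi]
        linarith
      exact (measure_mono hsub).trans
        (key_tail ε δ Δ hε hδ hΔ σ2 hσ2 hv a d hdpos ((le_abs_self d).trans ha))
  calc gaussianReal a σ2 S ≤ gaussianReal a σ2 (S ∩ Bᶜ) + gaussianReal a σ2 B := hsplit
    _ ≤ ENNReal.ofReal (Real.exp ε) * gaussianReal a' σ2 S + ENNReal.ofReal δ := by
        exact add_le_add hmain hbad
end

section
/- Let d ≥ 1, ε ∈ (0,1), δ ∈ (0,1), Δ > 0, and let a, a' ∈ ℝ^d (with the Euclidean norm) satisfy ‖a − a'‖₂ ≤ Δ. Set σ² = 2·ln(1.25/δ)·Δ²/ε², and let γ_x denote the probability measure on ℝ^d obtained as the product over coordinates i of gaussianReal x_i σ² (the isotropic Gaussian with mean x and per-coordinate variance σ²). Then γ_a and γ_{a'} are (ε, δ)-indistinguishable: for every measurable set S ⊆ ℝ^d, γ_a(S) ≤ exp(ε)·γ_{a'}(S) + δ. (This is the d-dimensional Gaussian mechanism with L₂ sensitivity Δ.) -/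
open MeasureTheory ProbabilityTheory Real Set
open scoped NNReal ENNReal

lemma gaussianPDFReal_conv (m1 m2 : ℝ) (v1 v2 : ℝ≥0) (hv1 : v1 ≠ 0) (hv2 : v2 ≠ 0) (z x : ℝ) :
    gaussianPDFReal m1 v1 x * gaussianPDFReal (m2 + x) v2 z
      = gaussianPDFReal (m1 + m2) (v1 + v2) z *
        gaussianPDFReal (m1 + (v1 : ℝ) / (v1 + v2) * (z - m1 - m2)) (v1 * v2 / (v1 + v2)) x := by
  have h1 : (0:ℝ) < v1 := lt_of_le_of_ne (v1.coe_nonneg) (by exact_mod_cast (Ne.symm hv1))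
  have h2 : (0:ℝ) < v2 := lt_of_le_of_ne (v2.coe_nonneg) (by exact_mod_cast (Ne.symm hv2))
  have h12 : (0:ℝ) < (v1:ℝ) + v2 := by linarith
  have hπ : (0:ℝ) < π := pi_pos
  simp only [gaussianPDFReal]
  have hcast : ((v1 * v2 / (v1 + v2) : ℝ≥0) : ℝ) = (v1:ℝ) * v2 / ((v1:ℝ) + v2) := by
    push_cast; ring
  have hcast2 : ((v1 + v2 : ℝ≥0) : ℝ) = (v1:ℝ) + v2 := by push_cast; ring
  rw [hcast, hcast2]
  -- prefactor identity
  have hpre : (√(2 * π * v1))⁻¹ * (√(2 * π * v2))⁻¹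
      = (√(2 * π * ((v1:ℝ) + v2)))⁻¹ * (√(2 * π * ((v1:ℝ) * v2 / ((v1:ℝ) + v2))))⁻¹ := by
    rw [← mul_inv, ← mul_inv, ← Real.sqrt_mul (by positivity), ← Real.sqrt_mul (by positivity)]
    congr 1
    field_simp
  -- exponent identity
  have hexp : rexp (-(x - m1) ^ 2 / (2 * v1)) * rexp (-(z - (m2 + x)) ^ 2 / (2 * v2))
      = rexp (-(z - (m1 + m2)) ^ 2 / (2 * ((v1:ℝ) + v2))) *
        rexp (-(x - (m1 + (v1:ℝ) / ((v1:ℝ) + v2) * (z - m1 - m2))) ^ 2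
          / (2 * ((v1:ℝ) * v2 / ((v1:ℝ) + v2)))) := by
    rw [← Real.exp_add, ← Real.exp_add]
    congr 1
    field_simp
    ring
  calc (√(2 * π * v1))⁻¹ * rexp (-(x - m1) ^ 2 / (2 * v1)) *
      ((√(2 * π * v2))⁻¹ * rexp (-(z - (m2 + x)) ^ 2 / (2 * v2)))
      = ((√(2 * π * v1))⁻¹ * (√(2 * π * v2))⁻¹) *
        (rexp (-(x - m1) ^ 2 / (2 * v1)) * rexp (-(z - (m2 + x)) ^ 2 / (2 * v2))) := by ring
    _ = _ := by rw [hpre, hexp]; ring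

lemma gaussianReal_conv (m1 m2 : ℝ) (v1 v2 : ℝ≥0) :
    ((gaussianReal m1 v1).prod (gaussianReal m2 v2)).map (fun p : ℝ × ℝ => p.1 + p.2)
      = gaussianReal (m1 + m2) (v1 + v2) := by
  by_cases hv1 : v1 = 0
  · subst hv1
    rw [gaussianReal_zero_var, Measure.dirac_prod, Measure.map_map measurable_add (by fun_prop)]
    have : ((fun p : ℝ × ℝ => p.1 + p.2) ∘ fun y => (m1, y)) = (fun y => m1 + y) := rfl
    rw [this, gaussianReal_map_const_add, add_comm, zero_add]
  by_cases hv2 : v2 = 0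
  · subst hv2
    rw [gaussianReal_zero_var, Measure.prod_dirac, Measure.map_map measurable_add (by fun_prop)]
    have : ((fun p : ℝ × ℝ => p.1 + p.2) ∘ fun x => (x, m2)) = (fun x => x + m2) := rfl
    rw [this, gaussianReal_map_add_const, add_zero]
  have hv12 : v1 + v2 ≠ 0 := by positivity
  have hvp : v1 * v2 / (v1 + v2) ≠ 0 := by
    rw [div_ne_zero_iff]
    exact ⟨mul_ne_zero hv1 hv2, hv12⟩
  ext s hs
  rw [Measure.map_apply measurable_add hs, Measure.prod_apply (measurable_add hs)]
  have hstep : ∀ x : ℝ, gaussianReal m2 v2 (Prod.mk x ⁻¹' ((fun p : ℝ × ℝ => p.1 + p.2) ⁻¹' s))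
      = ∫⁻ z in s, gaussianPDF (m2 + x) v2 z := by
    intro x
    have h1 : (Prod.mk x ⁻¹' ((fun p : ℝ × ℝ => p.1 + p.2) ⁻¹' s)) = (fun y => x + y) ⁻¹' s := rfl
    rw [h1, ← Measure.map_apply (by fun_prop) hs, gaussianReal_map_const_add,
      gaussianReal_apply _ hv2, add_comm]
  simp_rw [hstep]
  rw [gaussianReal_of_var_ne_zero _ hv1]
  have hFmeas : Measurable (Function.uncurry fun x z => gaussianPDF (m2 + x) v2 z) := by
    simp only [gaussianPDF, gaussianPDFReal, Function.uncurry]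
    fun_prop
  have hmeas2 : Measurable fun x => ∫⁻ z in s, gaussianPDF (m2 + x) v2 z :=
    Measurable.lintegral_prod_right hFmeas
  rw [lintegral_withDensity_eq_lintegral_mul _ (measurable_gaussianPDF _ _) hmeas2]
  simp only [Pi.mul_apply]
  have hswap : ∫⁻ x, gaussianPDF m1 v1 x * ∫⁻ z in s, gaussianPDF (m2 + x) v2 z
      = ∫⁻ x, ∫⁻ z in s, gaussianPDF m1 v1 x * gaussianPDF (m2 + x) v2 z := by
    congr 1 with x
    rw [lintegral_const_mul _ (measurable_gaussianPDF _ _)]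
  rw [hswap, lintegral_lintegral_swap]
  swap
  · apply Measurable.aemeasurable
    simp only [gaussianPDF, gaussianPDFReal, Function.uncurry]
    fun_prop
  rw [gaussianReal_apply _ hv12]
  congr 1 with z
  have key : ∀ x, gaussianPDF m1 v1 x * gaussianPDF (m2 + x) v2 z
      = gaussianPDF (m1 + m2) (v1 + v2) z *
        gaussianPDF (m1 + (v1 : ℝ) / (v1 + v2) * (z - m1 - m2)) (v1 * v2 / (v1 + v2)) x := by
    intro x
    simp only [gaussianPDF]
    rw [← ENNReal.ofReal_mul (gaussianPDFReal_nonneg _ _ _),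
      ← ENNReal.ofReal_mul (gaussianPDFReal_nonneg _ _ _),
      gaussianPDFReal_conv m1 m2 v1 v2 hv1 hv2 z x]
  simp_rw [key]
  rw [lintegral_const_mul _ (measurable_gaussianPDF _ _), lintegral_gaussianPDF_eq_one _ hvp,
    mul_one]

lemma pi_gaussian_linear : ∀ (n : ℕ) (c m : Fin n → ℝ) (v : ℝ≥0),
    (Measure.pi fun i => gaussianReal (m i) v).map (fun y => ∑ i, c i * y i)
      = gaussianReal (∑ i, c i * m i) ((∑ i, Real.toNNReal (c i ^ 2)) * v) := by
  intro n
  induction n with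
  | zero =>
    intro c m v
    rw [Measure.pi_of_empty, Measure.map_dirac' (by fun_prop)]
    simp
  | succ n ih =>
    intro c m v
    have hmp := measurePreserving_piFinSuccAbove (fun i : Fin (n + 1) => gaussianReal (m i) v) 0
    set e := MeasurableEquiv.piFinSuccAbove (fun _ : Fin (n + 1) => ℝ) 0 with he
    have hf1 : Measurable fun x : ℝ => c 0 * x := by fun_prop
    have hf2 : Measurable fun z : Fin n → ℝ => ∑ j, c (Fin.succ j) * z j := by fun_prop
    have hg : Measurable fun p : ℝ × (Fin n → ℝ) => c 0 * p.1 + ∑ j, c (Fin.succ j) * p.2 j := by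
      fun_prop
    have hcomp : (fun y : Fin (n + 1) → ℝ => ∑ i, c i * y i)
        = (fun p : ℝ × (Fin n → ℝ) => c 0 * p.1 + ∑ j, c (Fin.succ j) * p.2 j) ∘ e := by
      funext y
      simp [he, MeasurableEquiv.piFinSuccAbove_apply, Fin.zero_succAbove, Fin.sum_univ_succ, Fin.tail]
    rw [hcomp, ← Measure.map_map hg e.measurable, hmp.map_eq]
    have hdec : (fun p : ℝ × (Fin n → ℝ) => c 0 * p.1 + ∑ j, c (Fin.succ j) * p.2 j)
        = (fun q : ℝ × ℝ => q.1 + q.2) ∘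
          (Prod.map (fun x : ℝ => c 0 * x) (fun z : Fin n → ℝ => ∑ j, c (Fin.succ j) * z j)) := by
      funext p; rfl
    rw [hdec, ← Measure.map_map measurable_add (hf1.prodMap hf2),
      ← Measure.map_prod_map _ _ hf1 hf2]
    have h1 : (gaussianReal (m 0) v).map (fun x : ℝ => c 0 * x)
        = gaussianReal (c 0 * m 0) (⟨c 0 ^ 2, sq_nonneg _⟩ * v) := gaussianReal_map_const_mul _
    have h2 : (Measure.pi fun j : Fin n => gaussianReal (m (Fin.succAbove 0 j)) v).map
          (fun z : Fin n → ℝ => ∑ j, c (Fin.succ j) * z j) = gaussianReal (∑ j, c (Fin.succ j) * m (Fin.succ j))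
          ((∑ j, Real.toNNReal (c (Fin.succ j) ^ 2)) * v) := by
      simp only [Fin.zero_succAbove]
      exact ih (fun j => c (Fin.succ j)) (fun j => m (Fin.succ j)) v
    rw [h1, h2, gaussianReal_conv]
    congr 1
    · rw [Fin.sum_univ_succ]
    · rw [← NNReal.coe_inj]
      push_cast
      have hs : ∀ (k : ℕ) (g : Fin k → ℝ), (∑ i, ((g i ^ 2).toNNReal : ℝ)) = ∑ i, g i ^ 2 :=
        fun k g => Finset.sum_congr rfl fun i _ => Real.coe_toNNReal _ (sq_nonneg _)
      rw [hs, hs, Fin.sum_univ_succ (f := fun i => c i ^ 2)]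
      show (c 0 ^ 2 * (v : ℝ)) + _ = _
      ring

lemma lintegral_pi_prod : ∀ (n : ℕ) (μ : Fin n → Measure ℝ), (∀ i, SigmaFinite (μ i)) →
    ∀ (f : Fin n → ℝ → ℝ≥0∞), (∀ i, Measurable (f i)) →
    ∫⁻ y, ∏ i, f i (y i) ∂Measure.pi μ = ∏ i, ∫⁻ x, f i x ∂μ i := by
  intro n
  induction n with
  | zero =>
    intro μ hμ f hf
    rw [Measure.pi_of_empty]
    simp [lintegral_dirac]
  | succ n ih =>
    intro μ hμ f hf
    haveI : ∀ i, SigmaFinite (μ i) := hμ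
    have hmp := measurePreserving_piFinSuccAbove μ 0
    set e := MeasurableEquiv.piFinSuccAbove (fun _ : Fin (n + 1) => ℝ) 0 with he
    have h1 : ∫⁻ y, ∏ i, f i (y i) ∂Measure.pi μ
        = ∫⁻ p, ∏ i, f i (e.symm p i) ∂((μ 0).prod (Measure.pi fun j => μ (Fin.succAbove 0 j))) := by
      rw [← hmp.map_eq, lintegral_map_equiv]
      congr 1 with y
      simp
    rw [h1]
    have h2 : ∀ p : ℝ × (Fin n → ℝ), ∏ i, f i (e.symm p i)
        = f 0 p.1 * ∏ j, f (Fin.succ j) (p.2 j) := by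
      intro p
      rw [Fin.prod_univ_succ]
      simp [he, MeasurableEquiv.piFinSuccAbove_symm_apply, Fin.insertNth_zero]
    simp_rw [h2]
    rw [lintegral_prod_mul (f := f 0) (g := fun z : Fin n → ℝ => ∏ j, f (Fin.succ j) (z j))
      ((hf 0).aemeasurable)
      ((Finset.measurable_prod Finset.univ fun j _ =>
        (hf (Fin.succ j)).comp (measurable_pi_apply j)).aemeasurable)]
    rw [ih (fun j => μ (Fin.succAbove 0 j)) (fun j => inferInstance) (fun j => f (Fin.succ j))
      (fun j => hf _)]
    rw [Fin.prod_univ_succ]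
    simp [Fin.zero_succAbove]

lemma pi_gaussian_withDensity (n : ℕ) (m : Fin n → ℝ) (v : ℝ≥0) (hv : v ≠ 0) :
    Measure.pi (fun i => gaussianReal (m i) v)
      = (Measure.pi fun _ : Fin n => (volume : Measure ℝ)).withDensity
          fun y => ∏ i, gaussianPDF (m i) v (y i) := by
  refine Measure.pi_eq fun s hs => ?_
  rw [withDensity_apply _ (MeasurableSet.univ_pi hs), ← lintegral_indicator (MeasurableSet.univ_pi hs)]
  have hind : ∀ y : Fin n → ℝ, (Set.univ.pi s).indicator (fun y => ∏ i, gaussianPDF (m i) v (y i)) y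
      = ∏ i, (s i).indicator (fun x => gaussianPDF (m i) v x) (y i) := by
    intro y
    by_cases hy : y ∈ Set.univ.pi s
    · rw [Set.indicator_of_mem hy]
      exact Finset.prod_congr rfl fun i _ =>
        (Set.indicator_of_mem (hy i (Set.mem_univ i)) _).symm
    · rw [Set.indicator_of_notMem hy]
      rw [Set.mem_univ_pi] at hy
      push_neg at hy
      obtain ⟨i, hi⟩ := hy
      exact (Finset.prod_eq_zero (Finset.mem_univ i) (Set.indicator_of_notMem hi _)).symm
  simp_rw [hind]
  rw [lintegral_pi_prod n _ (fun _ => inferInstance) _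
    (fun i => (measurable_gaussianPDF _ _).indicator (hs i))]
  exact Finset.prod_congr rfl fun i _ => by
    rw [lintegral_indicator (hs i), ← gaussianReal_apply _ hv]

lemma integral_Ioi_self_mul_exp (v T : ℝ) (hv : 0 < v) :
    ∫ x in Ioi T, x * rexp (-x ^ 2 / (2 * v)) = v * rexp (-T ^ 2 / (2 * v)) := by
  have hderiv : ∀ x ∈ Ici T, HasDerivAt (fun x : ℝ => -v * rexp (-x ^ 2 / (2 * v)))
      (x * rexp (-x ^ 2 / (2 * v))) x := by
    intro x _
    have h1 : HasDerivAt (fun x : ℝ => -x ^ 2 / (2 * v)) (-(2 * x ^ 1) / (2 * v)) x :=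
      ((hasDerivAt_pow 2 x).neg).div_const (2 * v)
    have h2 := (h1.exp).const_mul (-v)
    refine h2.congr_deriv ?_
    field_simp
  have hint : IntegrableOn (fun x : ℝ => x * rexp (-x ^ 2 / (2 * v))) (Ioi T) := by
    have h3 : ∀ x : ℝ, -x ^ 2 / (2 * v) = -(1 / (2 * v)) * x ^ 2 := fun x => by field_simp
    simp_rw [h3]
    exact (integrable_mul_exp_neg_mul_sq (by positivity)).integrableOn
  have htend : Filter.Tendsto (fun x : ℝ => -v * rexp (-x ^ 2 / (2 * v))) Filter.atTop
      (nhds 0) := by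
    rw [show (0 : ℝ) = -v * 0 by ring]
    apply Filter.Tendsto.const_mul
    apply Real.tendsto_exp_atBot.comp
    have : (fun x : ℝ => -x ^ 2 / (2 * v)) = fun x : ℝ => -(x ^ 2 / (2 * v)) := by
      funext x; ring
    rw [this]
    exact Filter.tendsto_neg_atBot_iff.mpr
      ((Filter.tendsto_pow_atTop two_ne_zero).atTop_div_const (by positivity))
  rw [integral_Ioi_of_hasDerivAt_of_tendsto' hderiv hint htend]
  ring

lemma gaussian_tail_pos {v : ℝ≥0} (hv : v ≠ 0) {T : ℝ} (hT : 0 < T) :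
    gaussianReal 0 v (Ioi T) ≤
      ENNReal.ofReal ((√(2 * π * v))⁻¹ * ((v : ℝ) / T) * rexp (-T ^ 2 / (2 * v))) := by
  have hvR : (0 : ℝ) < v := lt_of_le_of_ne v.coe_nonneg (by exact_mod_cast hv.symm)
  rw [gaussianReal_apply_eq_integral _ hv]
  apply ENNReal.ofReal_le_ofReal
  have hmono : ∫ x in Ioi T, gaussianPDFReal 0 v x
      ≤ ∫ x in Ioi T, (√(2 * π * v))⁻¹ * (1 / T) * (x * rexp (-x ^ 2 / (2 * v))) := by
    apply setIntegral_mono_on (integrable_gaussianPDFReal 0 v).integrableOn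
    · apply Integrable.integrableOn
      apply Integrable.const_mul
      have h3 : ∀ x : ℝ, -x ^ 2 / (2 * (v:ℝ)) = -(1 / (2 * v)) * x ^ 2 := fun x => by field_simp
      simp_rw [h3]
      exact integrable_mul_exp_neg_mul_sq (by positivity)
    · exact measurableSet_Ioi
    · intro x hx
      rw [mem_Ioi] at hx
      rw [gaussianPDFReal]
      have h1 : (0:ℝ) < √(2 * π * v) := by positivity
      have h2 : rexp (-(x - 0) ^ 2 / (2 * v)) = rexp (-x ^ 2 / (2 * v)) := by norm_num
      rw [h2]
      have h4 : (1:ℝ) ≤ x / T := (one_le_div hT).mpr hx.le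
      have h5 : (0:ℝ) ≤ rexp (-x ^ 2 / (2 * v)) := (Real.exp_pos _).le
      calc (√(2 * π * v))⁻¹ * rexp (-x ^ 2 / (2 * v))
          ≤ (√(2 * π * v))⁻¹ * ((x / T) * rexp (-x ^ 2 / (2 * v))) := by
            apply mul_le_mul_of_nonneg_left _ (by positivity)
            nlinarith
        _ = (√(2 * π * v))⁻¹ * (1 / T) * (x * rexp (-x ^ 2 / (2 * v))) := by ring
  calc ∫ x in Ioi T, gaussianPDFReal 0 v x
      ≤ ∫ x in Ioi T, (√(2 * π * v))⁻¹ * (1 / T) * (x * rexp (-x ^ 2 / (2 * v))) := hmono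
    _ = (√(2 * π * v))⁻¹ * (1 / T) * ∫ x in Ioi T, x * rexp (-x ^ 2 / (2 * v)) := by
        rw [MeasureTheory.integral_const_mul]
    _ = (√(2 * π * v))⁻¹ * (1 / T) * ((v : ℝ) * rexp (-T ^ 2 / (2 * v))) := by
        rw [integral_Ioi_self_mul_exp _ _ hvR]
    _ = (√(2 * π * v))⁻¹ * ((v : ℝ) / T) * rexp (-T ^ 2 / (2 * v)) := by ring

lemma gaussian_half {v : ℝ≥0} (hv : v ≠ 0) :
    gaussianReal 0 v (Ioi (0 : ℝ)) = ENNReal.ofReal (1 / 2) := by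
  have hneg : (gaussianReal 0 v).map (fun x : ℝ => -x) = gaussianReal 0 v := by
    have h1 : (fun x : ℝ => -x) = fun x : ℝ => (-1 : ℝ) * x := by funext x; ring
    rw [h1, gaussianReal_map_const_mul]
    congr 1
    · norm_num
    · ext
      push_cast
      norm_num
  have hIio : gaussianReal 0 v (Iio (0:ℝ)) = gaussianReal 0 v (Ioi (0:ℝ)) := by
    conv_rhs => rw [← hneg]
    rw [Measure.map_apply (by fun_prop) measurableSet_Ioi]
    congr 1
    ext x
    simp
  have hzero : gaussianReal 0 v {(0:ℝ)} = 0 :=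
    (gaussianReal_absolutelyContinuous _ hv) (volume_singleton)
  have huniv : gaussianReal 0 v (Iio (0:ℝ)) + gaussianReal 0 v ({(0:ℝ)} ∪ Ioi (0:ℝ)) = 1 := by
    rw [← measure_union (by
      simp [Set.disjoint_left]) (measurableSet_singleton _ |>.union measurableSet_Ioi)]
    rw [show Iio (0:ℝ) ∪ ({(0:ℝ)} ∪ Ioi (0:ℝ)) = univ by
      ext x
      simp only [mem_union, mem_Iio, mem_singleton_iff, mem_Ioi, mem_univ, iff_true]
      rcases lt_trichotomy x 0 with h | h | h
      · exact Or.inl h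
      · exact Or.inr (Or.inl h)
      · exact Or.inr (Or.inr h)]
    simp
  rw [measure_union (by simp) measurableSet_Ioi, hzero, zero_add, hIio] at huniv
  have h2 : (2 : ℝ≥0∞) * gaussianReal 0 v (Ioi (0:ℝ)) = 1 := by
    rw [two_mul]; exact huniv
  have : gaussianReal 0 v (Ioi (0:ℝ)) = 1 / 2 := by
    rw [ENNReal.eq_div_iff two_ne_zero ENNReal.ofNat_ne_top]
    exact h2
  rw [this]
  rw [ENNReal.ofReal_div_of_pos (by norm_num)]
  norm_num

lemma gaussian_tail_general {v : ℝ≥0} (hv : v ≠ 0) (T : ℝ) :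
    gaussianReal 0 v (Ioi T) ≤
      ENNReal.ofReal (1 / 2 + (√(2 * π * v))⁻¹ * max 0 (-T)) := by
  have hvR : (0 : ℝ) < v := lt_of_le_of_ne v.coe_nonneg (by exact_mod_cast hv.symm)
  rcases le_or_gt 0 T with hT | hT
  · calc gaussianReal 0 v (Ioi T) ≤ gaussianReal 0 v (Ioi 0) :=
        measure_mono (Ioi_subset_Ioi hT)
      _ = ENNReal.ofReal (1 / 2) := gaussian_half hv
      _ ≤ _ := ENNReal.ofReal_le_ofReal (le_add_of_nonneg_right
          (mul_nonneg (by positivity) (le_max_left 0 (-T))))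
  · have hsplit : Ioi T = Ioc T 0 ∪ Ioi (0:ℝ) := (Ioc_union_Ioi_eq_Ioi hT.le).symm
    rw [hsplit]
    calc gaussianReal 0 v (Ioc T 0 ∪ Ioi 0)
        ≤ gaussianReal 0 v (Ioc T 0) + gaussianReal 0 v (Ioi 0) := measure_union_le _ _
      _ ≤ ENNReal.ofReal ((√(2 * π * v))⁻¹ * (-T)) + ENNReal.ofReal (1 / 2) := by
          gcongr
          · rw [gaussianReal_apply_eq_integral _ hv]
            apply ENNReal.ofReal_le_ofReal
            calc ∫ x in Ioc T 0, gaussianPDFReal 0 v x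
                ≤ ∫ _x in Ioc T 0, (√(2 * π * v))⁻¹ := by
                  apply setIntegral_mono_on (integrable_gaussianPDFReal 0 v).integrableOn
                  · exact integrableOn_const (by rw [Real.volume_Ioc]; exact ENNReal.ofReal_ne_top)
                  · exact measurableSet_Ioc
                  · intro x _
                    rw [gaussianPDFReal]
                    have hle : rexp (-(x - 0) ^ 2 / (2 * v)) ≤ 1 := by
                      rw [Real.exp_le_one_iff]
                      apply div_nonpos_of_nonpos_of_nonneg (by nlinarith [sq_nonneg (x - 0)])
                        (by positivity)
                    calc (√(2 * π * v))⁻¹ * rexp (-(x - 0) ^ 2 / (2 * v))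
                        ≤ (√(2 * π * v))⁻¹ * 1 :=
                          mul_le_mul_of_nonneg_left hle (by positivity)
                      _ = (√(2 * π * v))⁻¹ := mul_one _
                _ = (volume (Ioc T 0)).toReal * (√(2 * π * v))⁻¹ := by
                  rw [setIntegral_const]; rfl
                _ = (√(2 * π * v))⁻¹ * (-T) := by
                  rw [Real.volume_Ioc, ENNReal.toReal_ofReal (by linarith)]
                  ring
          · exact (gaussian_half hv).le
      _ ≤ _ := by
          rw [← ENNReal.ofReal_add (mul_nonneg (by positivity) (by linarith)) (by norm_num)]
          apply ENNReal.ofReal_le_ofReal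
          rw [max_eq_right (by linarith : (0:ℝ) ≤ -T)]
          linarith

section AuxNumeric

private lemma aux_exp_le {x : ℝ} (hx1 : x < 1) : Real.exp x ≤ 1 / (1 - x) := by
  have h := Real.add_one_le_exp (-x)
  rw [Real.exp_neg] at h
  have hp := Real.exp_pos x
  have h2 : rexp x * (rexp x)⁻¹ = 1 := mul_inv_cancel₀ hp.ne'
  rw [le_div_iff₀ (by linarith)]
  nlinarith

private lemma aux_sqrt2pi : (2.5066 : ℝ) ≤ √(2 * π) := by
  have hπ := Real.pi_gt_d6
  have hsq : √(2 * π) * √(2 * π) = 2 * π := Real.mul_self_sqrt (by positivity)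
  nlinarith [Real.sqrt_nonneg (2 * π)]

private lemma aux_t1 {q : ℝ} (hq : 0 < q) (h : (1.4 : ℝ) ≤ q ^ 2) :
    (0.76 : ℝ) ≤ q - 1 / (2 * q) := by
  have h1 : (1.1832 : ℝ) ≤ q := by nlinarith
  have h2 : 1 / (2 * q) ≤ 0.4226 := by
    rw [div_le_iff₀ (by positivity)]
    nlinarith
  linarith

private lemma aux_2_le {S t1 : ℝ} (hS : (2.5066 : ℝ) ≤ S) (ht1 : (0.76 : ℝ) ≤ t1) :
    1 / (S * t1) * 2 ≤ 1.25 := by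
  have hst : (0 : ℝ) < S * t1 := by nlinarith
  rw [div_mul_eq_mul_div, div_le_iff₀ hst]
  nlinarith

private lemma aux_B1 {q ε : ℝ} (hq : 0 < q) (h : (0.26 : ℝ) ≤ q ^ 2)
    (hε0 : 0 < ε) (hε1 : ε < 1) : ε / (2 * q) - q ≤ 0.471 := by
  have h1 : (0.5099 : ℝ) ≤ q := by nlinarith
  have h3 : ε / (2 * q) ≤ 1 / (2 * q) := by gcongr
  have h4 : 1 / (2 * q) ≤ 0.9806 := by
    rw [div_le_iff₀ (by positivity)]
    nlinarith
  linarith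

private lemma aux_key {ε Δ q rr σr : ℝ} (hε : 0 < ε) (hq : 0 < q)
    (hrr : 0 < rr) (hσr : 0 < σr) (hrrΔ : rr ≤ Δ) (hσrq : ε * σr = q * Δ) :
    (q - ε / (2 * q)) * (rr * σr) ≤ ε * σr ^ 2 - rr ^ 2 / 2 := by
  have h1 : (q - ε / (2 * q)) * (rr * σr) = (2 * q ^ 2 - ε) * (rr * σr) / (2 * q) := by
    field_simp
  have e1' : 2 * q * (ε * σr ^ 2) = 2 * q * (q * Δ * σr) := by
    linear_combination 2 * q * σr * hσrq
  have e2 : ε * (rr * σr) = q * Δ * rr := by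
    linear_combination rr * hσrq
  have h2 : (2 * q ^ 2 - ε) * (rr * σr) ≤ 2 * q * (ε * σr ^ 2 - rr ^ 2 / 2) := by
    nlinarith [mul_nonneg (sub_nonneg.mpr hrrΔ)
      (by positivity : (0:ℝ) ≤ 2 * q ^ 2 * σr + q * rr)]
  rw [h1, div_le_iff₀ (by positivity : (0:ℝ) < 2 * q)]
  linarith

private lemma aux_sq {t1 sw T : ℝ} (ht1 : 0 ≤ t1) (hsw : 0 < sw) (h : t1 * sw ≤ T) :
    t1 ^ 2 * sw ^ 2 ≤ T ^ 2 := by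
  have h0 : 0 ≤ t1 * sw := mul_nonneg ht1 hsw.le
  have h1 : 0 ≤ T + t1 * sw := by linarith
  nlinarith [mul_nonneg (sub_nonneg.mpr h) h1]

private lemma aux_exp_half : Real.exp (1 / 2 : ℝ) ≤ 2 := by
  have h := aux_exp_le (by norm_num : (1/2 : ℝ) < 1)
  norm_num at h
  linarith

private lemma aux_delta_half {L δ : ℝ} (hδeq : δ = 1.25 * Real.exp (-L)) (hL : L ≤ 0.7) :
    (1 / 2 : ℝ) ≤ δ := by
  have h35 : Real.exp (0.35 : ℝ) ≤ 1 / 0.65 := by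
    have h := aux_exp_le (by norm_num : (0.35 : ℝ) < 1)
    norm_num at h ⊢
    linarith
  have h07 : Real.exp (0.7 : ℝ) = Real.exp 0.35 * Real.exp 0.35 := by
    rw [← Real.exp_add]; norm_num
  have h1 : Real.exp (0.7 : ℝ) ≤ 2.5 := by nlinarith [Real.exp_pos (0.35 : ℝ)]
  have h2 : Real.exp (-(0.7 : ℝ)) ≤ Real.exp (-L) := Real.exp_le_exp.mpr (by linarith)
  have h3 : Real.exp (-(0.7 : ℝ)) = (Real.exp 0.7)⁻¹ := Real.exp_neg _
  have hp := Real.exp_pos (0.7 : ℝ)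
  have h4 : (0.4 : ℝ) ≤ Real.exp (-(0.7 : ℝ)) := by
    rw [h3]
    nlinarith [mul_inv_cancel₀ hp.ne', inv_pos.mpr hp]
  rw [hδeq]
  linarith

private lemma aux_delta_875 {L δ : ℝ} (hδeq : δ = 1.25 * Real.exp (-L)) (hL : L ≤ 0.3) :
    (0.875 : ℝ) ≤ δ := by
  have h03 : (0.7 : ℝ) ≤ Real.exp (-0.3) := by
    have h := Real.add_one_le_exp (-(0.3 : ℝ))
    norm_num at h ⊢
    linarith
  have h2 : Real.exp (-(0.3 : ℝ)) ≤ Real.exp (-L) := Real.exp_le_exp.mpr (by linarith)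
  rw [hδeq]
  linarith

end AuxNumeric

private lemma aux_VT {t1 sw T : ℝ} (hsw : 0 < sw) (h : t1 * sw ≤ T) :
    sw ^ 2 * t1 ≤ sw * T := by nlinarith

private lemma aux_eps {a ε : ℝ} (ha : 0 ≤ a) (hε1 : ε ≤ 1) : a * ε ≤ a := by nlinarith

private lemma aux_TposB2 {L Δ r2 x : ℝ} (hL : 0.3 ≤ L) (hΔ : 0 < Δ) (hr2 : 0 < r2)
    (hrΔ : r2 ≤ Δ ^ 2) (hx : 2 * L * Δ ^ 2 ≤ x) : 0 < x - r2 / 2 := by nlinarith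

private lemma aux_0471 {S : ℝ} (hS : (2.5066 : ℝ) ≤ S) : (0.471 : ℝ) / S ≤ 0.188 := by
  rw [div_le_iff₀ (by linarith)]
  nlinarith

lemma gaussian_mechanism_tail (ε δ Δ r2 : ℝ)
    (hε : 0 < ε) (hε1 : ε < 1) (hδ : 0 < δ) (hδ1 : δ < 1) (hΔ : 0 < Δ)
    (hr : 0 < r2) (hrΔ : r2 ≤ Δ ^ 2) (V : ℝ≥0)
    (hV : (V : ℝ) = r2 * (2 * Real.log (1.25 / δ) * Δ ^ 2 / ε ^ 2)) :
    gaussianReal 0 V (Ioi (ε * (2 * Real.log (1.25 / δ) * Δ ^ 2 / ε ^ 2) - r2 / 2))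
      ≤ ENNReal.ofReal δ := by
  set L : ℝ := Real.log (1.25 / δ) with hLdef
  have h125 : (1.25 : ℝ) ≤ 1.25 / δ := by
    rw [le_div_iff₀ hδ]
    linarith
  have hexp013 : Real.exp 0.13 ≤ 1.25 := by
    have h := aux_exp_le (by norm_num : (0.13 : ℝ) < 1)
    norm_num at h
    linarith
  have hL13 : (0.13 : ℝ) ≤ L := by
    calc (0.13 : ℝ) ≤ Real.log 1.25 := (Real.le_log_iff_exp_le (by norm_num)).mpr hexp013
      _ ≤ L := Real.log_le_log (by norm_num) h125
  have hL0 : (0 : ℝ) < L := lt_of_lt_of_le (by norm_num) hL13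
  set σ2r : ℝ := 2 * L * Δ ^ 2 / ε ^ 2 with hσ2rdef
  have hσ2rpos : 0 < σ2r := by positivity
  have hVpos : 0 < (V : ℝ) := by rw [hV]; positivity
  have hVne : V ≠ 0 := by
    intro h
    rw [h] at hVpos
    simp at hVpos
  have hδeq : δ = 1.25 * Real.exp (-L) := by
    have h1 : Real.exp L = 1.25 / δ := Real.exp_log (by positivity)
    rw [Real.exp_neg, h1]
    field_simp
  set q : ℝ := Real.sqrt (2 * L) with hqdef
  have hq2 : q ^ 2 = 2 * L := Real.sq_sqrt (by positivity)
  have hqpos : 0 < q := Real.sqrt_pos.mpr (by positivity)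
  set rr : ℝ := Real.sqrt r2 with hrrdef
  have hrr2 : rr ^ 2 = r2 := Real.sq_sqrt hr.le
  have hrrpos : 0 < rr := Real.sqrt_pos.mpr hr
  have hrrΔ : rr ≤ Δ := by
    calc rr ≤ Real.sqrt (Δ ^ 2) := Real.sqrt_le_sqrt hrΔ
      _ = Δ := Real.sqrt_sq hΔ.le
  set σr : ℝ := Real.sqrt σ2r with hσrdef
  have hσr2 : σr ^ 2 = σ2r := Real.sq_sqrt hσ2rpos.le
  have hσrpos : 0 < σr := Real.sqrt_pos.mpr hσ2rpos
  have hσrq : ε * σr = q * Δ := by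
    have h1 : σ2r = (q * Δ / ε) ^ 2 := by
      rw [hσ2rdef, ← hq2]
      ring
    have h2 : σr = q * Δ / ε := by
      rw [hσrdef, h1, Real.sqrt_sq (by positivity)]
    rw [h2]
    field_simp
  set sw : ℝ := rr * σr with hswdef
  have hswpos : 0 < sw := by positivity
  have hswV : (V : ℝ) = sw ^ 2 := by rw [hV, hswdef, mul_pow, hrr2, hσr2]
  set T : ℝ := ε * σ2r - r2 / 2 with hTdef
  have hTeq : T = ε * σr ^ 2 - rr ^ 2 / 2 := by rw [hTdef, hσr2, hrr2]
  have hKey : (q - ε / (2 * q)) * sw ≤ T := by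
    rw [hTeq, hswdef]
    exact aux_key hε hqpos hrrpos hσrpos hrrΔ hσrq
  have hsqrtV : √(2 * π * (V : ℝ)) = √(2 * π) * sw := by
    rw [hswV, show 2 * π * sw ^ 2 = (2 * π) * sw ^ 2 by ring,
      Real.sqrt_mul (by positivity), Real.sqrt_sq hswpos.le]
  have hSpos : (0 : ℝ) < √(2 * π) := Real.sqrt_pos.mpr (by positivity)
  have hS : (2.5066 : ℝ) ≤ √(2 * π) := aux_sqrt2pi
  by_cases hA : (0.7 : ℝ) ≤ L
  · -- Case A : sharp tail bound
    set t1 : ℝ := q - 1 / (2 * q) with ht1def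
    have ht1 : (0.76 : ℝ) ≤ t1 := aux_t1 hqpos (by linarith [hq2])
    have ht1sw : t1 * sw ≤ T := by
      have h4 : t1 ≤ q - ε / (2 * q) := by
        rw [ht1def]
        gcongr
      calc t1 * sw ≤ (q - ε / (2 * q)) * sw := mul_le_mul_of_nonneg_right h4 hswpos.le
        _ ≤ T := hKey
    have hTpos : 0 < T :=
      lt_of_lt_of_le (mul_pos (lt_of_lt_of_le (by norm_num) ht1) hswpos) ht1sw
    refine le_trans (gaussian_tail_pos hVne hTpos) (ENNReal.ofReal_le_ofReal ?_)
    have hexphalf : Real.exp (L - t1 ^ 2 / 2) ≤ 2 := by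
      have ht1sq : t1 ^ 2 = q ^ 2 - 1 + (1 / (2 * q)) ^ 2 := by
        rw [ht1def]
        field_simp
        ring
      have h1 : L - t1 ^ 2 / 2 ≤ 1 / 2 := by
        have hu := sq_nonneg (1 / (2 * q))
        linarith [hq2]
      calc Real.exp (L - t1 ^ 2 / 2) ≤ Real.exp (1 / 2 : ℝ) := Real.exp_le_exp.mpr h1
        _ ≤ 2 := aux_exp_half
    have hX : rexp (-T ^ 2 / (2 * (V : ℝ))) ≤ 2 * rexp (-L) := by
      have h0 : t1 ^ 2 * (V : ℝ) ≤ T ^ 2 := by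
        rw [hswV]
        exact aux_sq (le_of_lt (lt_of_lt_of_le (by norm_num) ht1)) hswpos ht1sw
      have h1 : t1 ^ 2 / 2 ≤ T ^ 2 / (2 * (V : ℝ)) := by
        rw [div_le_div_iff₀ (by norm_num) (by positivity)]
        linarith
      calc rexp (-T ^ 2 / (2 * (V : ℝ))) ≤ rexp (-(t1 ^ 2 / 2)) := by
            apply Real.exp_le_exp.mpr
            rw [neg_div]
            linarith
        _ = rexp (L - t1 ^ 2 / 2) * rexp (-L) := by rw [← Real.exp_add]; ring_nf
        _ ≤ 2 * rexp (-L) := mul_le_mul_of_nonneg_right hexphalf (Real.exp_pos _).le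
    rw [hsqrtV, hδeq]
    have hVT : (V : ℝ) / T ≤ sw / t1 := by
      rw [div_le_div_iff₀ hTpos (lt_of_lt_of_le (by norm_num) ht1)]
      rw [hswV]
      linarith [aux_VT hswpos ht1sw]
    have h2 : (√(2 * π) * sw)⁻¹ * ((V : ℝ) / T) ≤ 1 / (√(2 * π) * t1) := by
      calc (√(2 * π) * sw)⁻¹ * ((V : ℝ) / T) ≤ (√(2 * π) * sw)⁻¹ * (sw / t1) :=
            mul_le_mul_of_nonneg_left hVT (by positivity)
        _ = 1 / (√(2 * π) * t1) := by
            field_simp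
    calc (√(2 * π) * sw)⁻¹ * ((V : ℝ) / T) * rexp (-T ^ 2 / (2 * (V : ℝ)))
        ≤ (1 / (√(2 * π) * t1)) * (2 * rexp (-L)) :=
          mul_le_mul h2 hX (Real.exp_pos _).le (by positivity)
      _ ≤ 1.25 * rexp (-L) := by
          have h5 : 1 / (√(2 * π) * t1) * 2 ≤ 1.25 := aux_2_le hS ht1
          calc (1 / (√(2 * π) * t1)) * (2 * rexp (-L))
              = (1 / (√(2 * π) * t1) * 2) * rexp (-L) := by ring
            _ ≤ 1.25 * rexp (-L) := mul_le_mul_of_nonneg_right h5 (Real.exp_pos _).le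
  · push_neg at hA
    by_cases hB : (0.3 : ℝ) ≤ L
    · -- Case B2 : T > 0, measure at most 1/2
      have hεσ : 2 * L * Δ ^ 2 ≤ ε * σ2r := by
        have h1 : ε * σ2r = 2 * L * Δ ^ 2 / ε := by
          rw [hσ2rdef]
          field_simp
        rw [h1, le_div_iff₀ hε]
        exact aux_eps (by positivity) hε1.le
      have hTpos : 0 < T := by
        rw [hTdef]
        exact aux_TposB2 hB hΔ hr hrΔ hεσ
      calc gaussianReal 0 V (Ioi T) ≤ gaussianReal 0 V (Ioi 0) :=
            measure_mono (Ioi_subset_Ioi hTpos.le)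
        _ = ENNReal.ofReal (1 / 2) := gaussian_half hVne
        _ ≤ ENNReal.ofReal δ := ENNReal.ofReal_le_ofReal (aux_delta_half hδeq hA.le)
    · -- Case B1 : 0.13 ≤ L < 0.3
      push_neg at hB
      refine le_trans (gaussian_tail_general hVne T) (ENNReal.ofReal_le_ofReal ?_)
      have hmT : -T ≤ 0.471 * sw := by
        have h1 : (ε / (2 * q) - q) * sw = -((q - ε / (2 * q)) * sw) := by ring
        have h2 : -T ≤ (ε / (2 * q) - q) * sw := by linarith [hKey]
        have h3 : ε / (2 * q) - q ≤ 0.471 := aux_B1 hqpos (by linarith [hq2]) hε hε1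
        have h4 : (ε / (2 * q) - q) * sw ≤ 0.471 * sw :=
          mul_le_mul_of_nonneg_right h3 hswpos.le
        linarith
      have hmax : max 0 (-T) ≤ 0.471 * sw := max_le (by positivity) hmT
      have hterm : (√(2 * π * (V : ℝ)))⁻¹ * max 0 (-T) ≤ 0.188 := by
        rw [hsqrtV]
        have h1 : (√(2 * π) * sw)⁻¹ * max 0 (-T) ≤ (√(2 * π) * sw)⁻¹ * (0.471 * sw) :=
          mul_le_mul_of_nonneg_left hmax (by positivity)
        have h2 : (√(2 * π) * sw)⁻¹ * (0.471 * sw) = 0.471 / √(2 * π) := by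
          field_simp
        linarith [aux_0471 hS]
      have hδ875 : (0.875 : ℝ) ≤ δ := aux_delta_875 hδeq hB.le
      linarith

private lemma pdf_ratio_s1 {d : ℕ} (a a' x : Fin d → ℝ) (σ2 : ℝ≥0) (hσ2 : 0 < (σ2 : ℝ)) (ε τ : ℝ)
    (hτ : τ = ε * σ2 + ((∑ i, a i ^ 2) - (∑ i, a' i ^ 2)) / 2)
    (hgx : ∑ i, (a i - a' i) * x i ≤ τ) :
    (∏ i, gaussianPDFReal (a i) σ2 (x i)) ≤ Real.exp ε * ∏ i, gaussianPDFReal (a' i) σ2 (x i) := by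
  have hexpand : ∀ m : Fin d → ℝ, (∏ i, gaussianPDFReal (m i) σ2 (x i))
      = (√(2 * π * σ2))⁻¹ ^ d * Real.exp (∑ i, -(x i - m i) ^ 2 / (2 * σ2)) := by
    intro m
    simp_rw [gaussianPDFReal]
    rw [Finset.prod_mul_distrib, Real.exp_sum, Finset.prod_const, Finset.card_univ,
      Fintype.card_fin]
  rw [hexpand, hexpand]
  have hsum : ∑ i, -(x i - a i) ^ 2 / (2 * (σ2:ℝ)) ≤ ε + ∑ i, -(x i - a' i) ^ 2 / (2 * (σ2:ℝ)) := by
    have hpt : ∀ i, -(x i - a i) ^ 2 / (2 * (σ2:ℝ)) - -(x i - a' i) ^ 2 / (2 * (σ2:ℝ))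
        = (2 * ((a i - a' i) * x i) + (a' i ^ 2 - a i ^ 2)) / (2 * (σ2:ℝ)) := by
      intro i
      field_simp
      ring
    have hdiff : ∑ i, (-(x i - a i) ^ 2 / (2 * (σ2:ℝ)) - -(x i - a' i) ^ 2 / (2 * (σ2:ℝ)))
        = (2 * (∑ i, (a i - a' i) * x i) + ((∑ i, a' i ^ 2) - ∑ i, a i ^ 2)) / (2 * (σ2:ℝ)) := by
      rw [Finset.sum_congr rfl (fun i _ => hpt i), ← Finset.sum_div]
      congr 1
      rw [Finset.sum_add_distrib, Finset.sum_sub_distrib, ← Finset.mul_sum]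
    have hsplit := Finset.sum_sub_distrib (s := (Finset.univ : Finset (Fin d)))
      (f := fun i => -(x i - a i) ^ 2 / (2 * (σ2:ℝ)))
      (g := fun i => -(x i - a' i) ^ 2 / (2 * (σ2:ℝ)))
    have h1 : (2 * (∑ i, (a i - a' i) * x i) + ((∑ i, a' i ^ 2) - ∑ i, a i ^ 2)) / (2 * (σ2:ℝ))
        ≤ ε := by
      rw [div_le_iff₀ (by positivity)]
      have h2 : 2 * τ = 2 * (ε * σ2) + ((∑ i, a i ^ 2) - ∑ i, a' i ^ 2) := by
        rw [hτ]; ring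
      linarith
    rw [hsplit] at hdiff
    linarith
  have hP : (0:ℝ) ≤ (√(2 * π * σ2))⁻¹ ^ d := by positivity
  calc (√(2 * π * σ2))⁻¹ ^ d * Real.exp (∑ i, -(x i - a i) ^ 2 / (2 * σ2))
      ≤ (√(2 * π * σ2))⁻¹ ^ d * (Real.exp ε * Real.exp (∑ i, -(x i - a' i) ^ 2 / (2 * σ2))) := by
        apply mul_le_mul_of_nonneg_left _ hP
        rw [← Real.exp_add]
        exact Real.exp_le_exp.mpr hsum
    _ = Real.exp ε * ((√(2 * π * σ2))⁻¹ ^ d * Real.exp (∑ i, -(x i - a' i) ^ 2 / (2 * σ2))) := by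
        ring

/-- The d-dimensional Gaussian mechanism with L₂ sensitivity Δ: for `‖a - a'‖₂ ≤ Δ` and
per-coordinate variance `σ² = 2 ln(1.25/δ) Δ² / ε²`, the isotropic Gaussians centered at
`a` and `a'` are `(ε, δ)`-indistinguishable. -/
theorem gaussian_mechanism_multi_dim
    (d : ℕ) (hd : 1 ≤ d)
    (ε δ Δ : ℝ)
    (hε : ε ∈ Set.Ioo (0 : ℝ) 1) (hδ : δ ∈ Set.Ioo (0 : ℝ) 1) (hΔ : 0 < Δ)
    (a a' : EuclideanSpace ℝ (Fin d)) (ha : ‖a - a'‖ ≤ Δ)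
    (σ2 : NNReal) (hσ2 : (σ2 : ℝ) = 2 * Real.log (1.25 / δ) * Δ ^ 2 / ε ^ 2)
    (γ : EuclideanSpace ℝ (Fin d) → Measure (EuclideanSpace ℝ (Fin d)))
    (hγ : ∀ x, γ x = (Measure.pi fun i => gaussianReal (x i) σ2).map
        (MeasurableEquiv.toLp 2 (Fin d → ℝ)))
    (S : Set (EuclideanSpace ℝ (Fin d))) (hS : MeasurableSet S) :
    γ a S ≤ ENNReal.ofReal (Real.exp ε) * γ a' S + ENNReal.ofReal δ := by
  obtain ⟨hε0, hε1⟩ := hε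
  obtain ⟨hδ0, hδ1⟩ := hδ
  set c : Fin d → ℝ := fun i => a i - a' i with hc
  set r2 : ℝ := ∑ i, c i ^ 2 with hr2
  have hr2nonneg : 0 ≤ r2 := by positivity
  have hnorm : ‖a - a'‖ ^ 2 = r2 := by
    rw [EuclideanSpace.norm_eq, Real.sq_sqrt (by positivity)]
    apply Finset.sum_congr rfl
    intro i _
    simp [hc, Real.norm_eq_abs, sq_abs]
  have hr2Δ : r2 ≤ Δ ^ 2 := by
    rw [← hnorm]
    exact pow_le_pow_left₀ (norm_nonneg _) ha 2
  rcases eq_or_lt_of_le hr2nonneg with hr0 | hrpos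
  · -- degenerate case : a = a'
    have hci : ∀ i, c i = 0 := by
      intro i
      have h := (Finset.sum_eq_zero_iff_of_nonneg
        (fun i _ => sq_nonneg (c i))).mp hr0.symm i (Finset.mem_univ i)
      exact pow_eq_zero_iff (n := 2) (by norm_num) |>.mp h
    have haa : a = a' := by
      ext i
      have h := hci i
      rw [hc] at h
      simp only at h
      linarith
    rw [haa]
    calc γ a' S = 1 * γ a' S := (one_mul _).symm
      _ ≤ ENNReal.ofReal (Real.exp ε) * γ a' S := by
          gcongr
          rw [show (1 : ℝ≥0∞) = ENNReal.ofReal 1 by simp]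
          exact ENNReal.ofReal_le_ofReal (Real.one_le_exp hε0.le)
      _ ≤ ENNReal.ofReal (Real.exp ε) * γ a' S + ENNReal.ofReal δ := le_self_add
  · -- main case
    have hL0 : 0 < Real.log (1.25 / δ) :=
      Real.log_pos ((one_lt_div hδ0).mpr (by linarith))
    have hσ2pos : 0 < (σ2 : ℝ) := by
      rw [hσ2]
      exact div_pos (by positivity) (by positivity)
    have hσ2ne : σ2 ≠ 0 := by
      intro h
      rw [h] at hσ2pos
      simp at hσ2pos
    set e := MeasurableEquiv.toLp 2 (Fin d → ℝ) with he
    set S' : Set (Fin d → ℝ) := ⇑e ⁻¹' S with hS'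
    have hSm : MeasurableSet S' := e.measurable hS
    have hγa : γ a S = Measure.pi (fun i => gaussianReal (a i) σ2) S' := by
      rw [hγ a, MeasurableEquiv.map_apply]
    have hγa' : γ a' S = Measure.pi (fun i => gaussianReal (a' i) σ2) S' := by
      rw [hγ a', MeasurableEquiv.map_apply]
    rw [hγa, hγa']
    set μa := Measure.pi (fun i => gaussianReal (a i) σ2) with hμa
    set μa' := Measure.pi (fun i => gaussianReal (a' i) σ2) with hμa'
    set τ : ℝ := ε * σ2 + ((∑ i, a i ^ 2) - ∑ i, a' i ^ 2) / 2 with hτ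
    set g : (Fin d → ℝ) → ℝ := fun x => ∑ i, c i * x i with hgdef
    have hgm : Measurable g := by
      rw [hgdef]
      fun_prop
    set G : Set (Fin d → ℝ) := g ⁻¹' Iic τ with hG
    have hGm : MeasurableSet G := hgm measurableSet_Iic
    have hsplit : μa S' ≤ μa (S' ∩ G) + μa Gᶜ := by
      calc μa S' ≤ μa ((S' ∩ G) ∪ Gᶜ) := by
            apply measure_mono
            intro x hx
            by_cases hxG : x ∈ G
            · exact Or.inl ⟨hx, hxG⟩
            · exact Or.inr hxG
        _ ≤ μa (S' ∩ G) + μa Gᶜ := measure_union_le _ _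
    have hcomp : μa (S' ∩ G) ≤ ENNReal.ofReal (Real.exp ε) * μa' (S' ∩ G) := by
      rw [hμa, hμa', pi_gaussian_withDensity d _ σ2 hσ2ne, pi_gaussian_withDensity d _ σ2 hσ2ne,
        withDensity_apply _ (hSm.inter hGm), withDensity_apply _ (hSm.inter hGm),
        ← lintegral_const_mul _ (by
          apply Finset.measurable_prod
          intro i _
          exact (measurable_gaussianPDF _ _).comp (measurable_pi_apply i))]
      apply setLIntegral_mono (by
          apply Measurable.const_mul
          apply Finset.measurable_prod
          intro i _
          exact (measurable_gaussianPDF _ _).comp (measurable_pi_apply i))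
      intro x hx
      have hgx : ∑ i, c i * x i ≤ τ := hx.2
      have hprod : ∀ m : Fin d → ℝ, (∏ i, gaussianPDF (m i) σ2 (x i))
          = ENNReal.ofReal (∏ i, gaussianPDFReal (m i) σ2 (x i)) := by
        intro m
        rw [ENNReal.ofReal_prod_of_nonneg (fun i _ => gaussianPDFReal_nonneg _ _ _)]
        rfl
      rw [hprod, hprod, ← ENNReal.ofReal_mul (Real.exp_nonneg ε)]
      apply ENNReal.ofReal_le_ofReal
      apply pdf_ratio_s1 a a' x σ2 hσ2pos ε τ hτ
      simpa [hc] using hgx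
    have htail : μa Gᶜ ≤ ENNReal.ofReal δ := by
      have hGc : Gᶜ = g ⁻¹' Ioi τ := by
        rw [hG]
        ext x
        simp [not_le]
      rw [hGc, ← Measure.map_apply hgm measurableSet_Ioi, hμa, hgdef,
        pi_gaussian_linear d c (fun i => a i) σ2]
      set M : ℝ := ∑ i, c i * a i with hM
      set V : ℝ≥0 := (∑ i, Real.toNNReal (c i ^ 2)) * σ2 with hV
      have hmap : gaussianReal M V = (gaussianReal 0 V).map (· + M) := by
        rw [gaussianReal_map_add_const, zero_add]
      rw [hmap, Measure.map_apply (measurable_add_const M) measurableSet_Ioi]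
      have hpre : (· + M) ⁻¹' Ioi τ = Ioi (τ - M) := by
        ext z
        simp only [mem_preimage, mem_Ioi]
        constructor <;> intro h <;> linarith
      rw [hpre]
      have hVcoe : (V : ℝ) = r2 * (σ2 : ℝ) := by
        rw [hV]
        push_cast
        congr 1
        rw [hr2]
        apply Finset.sum_congr rfl
        intro i _
        exact Real.coe_toNNReal _ (sq_nonneg _)
      have hsq : ∀ i, c i ^ 2 = a i ^ 2 - 2 * (a i * a' i) + a' i ^ 2 := by
        intro i
        rw [hc]
        ring
      have hr2exp : r2 = (∑ i, a i ^ 2) - 2 * (∑ i, a i * a' i) + ∑ i, a' i ^ 2 := by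
        rw [hr2, Finset.sum_congr rfl (fun i _ => hsq i)]
        rw [Finset.sum_add_distrib, Finset.sum_sub_distrib, ← Finset.mul_sum]
      have hMexp : M = (∑ i, a i ^ 2) - ∑ i, a i * a' i := by
        rw [hM]
        have : ∀ i, c i * a i = a i ^ 2 - a i * a' i := by
          intro i
          rw [hc]
          ring
        rw [Finset.sum_congr rfl (fun i _ => this i), Finset.sum_sub_distrib]
      have hTM : τ - M = ε * (σ2 : ℝ) - r2 / 2 := by
        rw [hτ, hMexp, hr2exp]
        ring
      rw [hTM, hσ2]
      exact gaussian_mechanism_tail ε δ Δ r2 hε0 hε1 hδ0 hδ1 hΔ hrpos hr2Δ V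
        (by rw [hVcoe, hσ2])
    calc μa S' ≤ μa (S' ∩ G) + μa Gᶜ := hsplit
      _ ≤ ENNReal.ofReal (Real.exp ε) * μa' (S' ∩ G) + ENNReal.ofReal δ :=
          add_le_add hcomp htail
      _ ≤ ENNReal.ofReal (Real.exp ε) * μa' S' + ENNReal.ofReal δ := by
          gcongr
          exact inter_subset_left
end
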